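/- (Gradient with respect to β for approach 1.) In the reparametrized GLMM, with η_i = X_i β + Z_i b_i, b_i = L_i b̃_i + λ_i, Λ_i = L_i L_i^T = (Ω + Z_i^T H_i(η̂_i) Z_i)^{−1}, λ_i = Λ_i Z_i^T { y_i − g_i(η̂_i) + H_i(η̂_i)(η̂_i − X_i β) } with η̂_i ∈ ℝ^{n_i} fixed, a_i = Z_i^T (y_i − g_i(η_i)) − Ω b_i, and prior β ~ N(0, σ_β² I_p), the gradient of the reparametrized log joint density ℓ(θ̃) with respect to β equals Σ_{i=1}^n X_i^T { y_i − g_i(η_i) − H_i(η̂_i) Z_i Λ_i a_i } − β/σ_β². -/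

import Mathlib

open Matrix

/-- The continuous linear map `v ↦ a ⬝ᵥ v`. -/
noncomputable def dotCLM {ι : Type*} [Fintype ι] (a : ι → ℝ) : (ι → ℝ) →L[ℝ] ℝ :=
  LinearMap.toContinuousLinearMap
    { toFun := fun v => a ⬝ᵥ v
      map_add' := fun x y => dotProduct_add a x y
      map_smul' := fun c x => by simp [dotProduct_smul] }

lemma dotCLM_apply {ι : Type*} [Fintype ι] (a v : ι → ℝ) : dotCLM a v = a ⬝ᵥ v := rfl

lemma dotCLM_add {ι : Type*} [Fintype ι] (a b : ι → ℝ) :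
    dotCLM (a + b) = dotCLM a + dotCLM b := by
  ext v; simp [dotCLM_apply, add_dotProduct]

lemma dotCLM_sub {ι : Type*} [Fintype ι] (a b : ι → ℝ) :
    dotCLM (a - b) = dotCLM a - dotCLM b := by
  ext v; simp [dotCLM_apply, sub_dotProduct]

lemma dotCLM_smul {ι : Type*} [Fintype ι] (c : ℝ) (a : ι → ℝ) :
    dotCLM (c • a) = c • dotCLM a := by
  ext v; simp [dotCLM_apply, smul_dotProduct]

lemma dotCLM_sum {ι κ : Type*} [Fintype ι] (s : Finset κ) (f : κ → ι → ℝ) :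
    dotCLM (∑ i ∈ s, f i) = ∑ i ∈ s, dotCLM (f i) := by
  ext v
  simp only [dotCLM_apply, dotProduct, Finset.sum_apply, Finset.sum_mul,
    ContinuousLinearMap.coe_sum', Finset.sum_apply]
  exact Finset.sum_comm

lemma sum_smul_rows {m q : ℕ} (A : Matrix (Fin m) (Fin q) ℝ) (c : Fin m → ℝ) :
    ∑ j, c j • A j = Aᵀ *ᵥ c := by
  funext k
  simp [Matrix.mulVec, dotProduct, Finset.sum_apply, mul_comm]

lemma hasFDerivAt_affine {m q : ℕ} (A : Matrix (Fin m) (Fin q) ℝ) (d : Fin m → ℝ)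
    (j : Fin m) (β0 : Fin q → ℝ) :
    HasFDerivAt (fun β => (d + A *ᵥ β) j) (dotCLM (A j)) β0 := by
  have h : (fun β : Fin q → ℝ => (d + A *ᵥ β) j) = fun β => d j + dotCLM (A j) β := by
    funext β; simp [dotCLM_apply, Matrix.mulVec]
  rw [h]
  exact (dotCLM (A j)).hasFDerivAt.const_add (d j)

lemma hasFDerivAt_quad {m : ℕ} (S : Matrix (Fin m) (Fin m) ℝ) (hS : Sᵀ = S) (x0 : Fin m → ℝ) :
    HasFDerivAt (fun x : Fin m → ℝ => x ⬝ᵥ (S *ᵥ x)) (dotCLM ((2:ℝ) • (S *ᵥ x0))) x0 := by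
  have hfun : (fun x : Fin m → ℝ => x ⬝ᵥ (S *ᵥ x))
      = fun x => ∑ j, ∑ k, S j k * (x j * x k) := by
    funext x
    simp [dotProduct, Matrix.mulVec, Finset.mul_sum]
    congr 1; funext j; congr 1; funext k; ring
  rw [hfun]
  have hjk : ∀ j k : Fin m, HasFDerivAt (fun x : Fin m → ℝ => S j k * (x j * x k))
      (S j k • (x0 j • (ContinuousLinearMap.proj k : (Fin m → ℝ) →L[ℝ] ℝ)
        + x0 k • (ContinuousLinearMap.proj j : (Fin m → ℝ) →L[ℝ] ℝ))) x0 := by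
    intro j k
    have hj : HasFDerivAt (fun x : Fin m → ℝ => x j)
        (ContinuousLinearMap.proj j : (Fin m → ℝ) →L[ℝ] ℝ) x0 :=
      by exact (ContinuousLinearMap.proj j : (Fin m → ℝ) →L[ℝ] ℝ).hasFDerivAt
    have hk : HasFDerivAt (fun x : Fin m → ℝ => x k)
        (ContinuousLinearMap.proj k : (Fin m → ℝ) →L[ℝ] ℝ) x0 :=
      by exact (ContinuousLinearMap.proj k : (Fin m → ℝ) →L[ℝ] ℝ).hasFDerivAt
    exact (hj.mul hk).const_mul (S j k)
  have H := HasFDerivAt.fun_sum (fun j (_ : j ∈ Finset.univ) =>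
    HasFDerivAt.fun_sum (fun k (_ : k ∈ Finset.univ) => hjk j k))
  refine H.congr_fderiv (Eq.symm ?_)
  ext v
  simp [dotCLM_apply, dotProduct, Matrix.mulVec, Finset.sum_mul, Finset.mul_sum]
  have hsym : ∀ j k : Fin m, S k j = S j k := fun j k => congrFun (congrFun hS j) k
  simp only [Finset.sum_add_distrib]
  have h2 : (∑ x : Fin m, ∑ x_1 : Fin m, S x x_1 * (x0 x * v x_1))
      = ∑ x : Fin m, ∑ x_1 : Fin m, S x x_1 * (x0 x_1 * v x) := by
    rw [Finset.sum_comm]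
    exact Finset.sum_congr rfl fun j _ => Finset.sum_congr rfl fun k _ => by rw [hsym]
  rw [h2, ← Finset.sum_add_distrib]
  refine Finset.sum_congr rfl fun j _ => ?_
  rw [← Finset.sum_add_distrib]
  exact Finset.sum_congr rfl fun k _ => by ring

noncomputable def mulVecCLM {m q : ℕ} (A : Matrix (Fin m) (Fin q) ℝ) :
    (Fin q → ℝ) →L[ℝ] (Fin m → ℝ) :=
  LinearMap.toContinuousLinearMap A.mulVecLin

lemma mulVecCLM_apply {m q : ℕ} (A : Matrix (Fin m) (Fin q) ℝ) (v : Fin q → ℝ) :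
    mulVecCLM A v = A *ᵥ v := rfl

lemma hasFDerivAt_affine_vec {m q : ℕ} (A : Matrix (Fin m) (Fin q) ℝ) (d : Fin m → ℝ)
    (β0 : Fin q → ℝ) :
    HasFDerivAt (fun β => d + A *ᵥ β) (mulVecCLM A) β0 := by
  have h : (fun β : Fin q → ℝ => d + A *ᵥ β) = fun β => d + mulVecCLM A β := rfl
  rw [h]
  exact (mulVecCLM A).hasFDerivAt.const_add d

lemma hasFDerivAt_quad_affine {m q : ℕ} (S : Matrix (Fin m) (Fin m) ℝ) (hS : Sᵀ = S)
    (A : Matrix (Fin m) (Fin q) ℝ) (d : Fin m → ℝ) (β0 : Fin q → ℝ) :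
    HasFDerivAt (fun β : Fin q → ℝ => (d + A *ᵥ β) ⬝ᵥ (S *ᵥ (d + A *ᵥ β)))
      (dotCLM ((2:ℝ) • (Aᵀ *ᵥ (S *ᵥ (d + A *ᵥ β0))))) β0 := by
  have hu := hasFDerivAt_affine_vec A d β0
  have hq := hasFDerivAt_quad S hS (d + A *ᵥ β0)
  have H := hq.comp β0 hu
  refine H.congr_fderiv (Eq.symm ?_)
  ext v
  simp only [ContinuousLinearMap.coe_comp', Function.comp_apply, dotCLM_apply,
    mulVecCLM_apply, smul_dotProduct]
  rw [Matrix.mulVec_transpose, ← Matrix.dotProduct_mulVec]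

lemma hasFDerivAt_dotself {q : ℕ} (β0 : Fin q → ℝ) :
    HasFDerivAt (fun β : Fin q → ℝ => β ⬝ᵥ β) (dotCLM ((2:ℝ) • β0)) β0 := by
  have := hasFDerivAt_quad (1 : Matrix (Fin q) (Fin q) ℝ) (Matrix.transpose_one) β0
  simpa [Matrix.one_mulVec] using this

lemma key_vec {m q r : ℕ} (Xm : Matrix (Fin m) (Fin q) ℝ) (Zm : Matrix (Fin m) (Fin r) ℝ)
    (Hd : Matrix (Fin m) (Fin m) ℝ) (hHd : Hdᵀ = Hd)
    (Λ : Matrix (Fin r) (Fin r) ℝ) (hΛ : Λᵀ = Λ)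
    (Ω : Matrix (Fin r) (Fin r) ℝ) (w : Fin m → ℝ) (b0 : Fin r → ℝ) :
    (Xm + Zm * (-(Λ * Zmᵀ * Hd * Xm)))ᵀ *ᵥ w
      - (-(Λ * Zmᵀ * Hd * Xm))ᵀ *ᵥ (Ω *ᵥ b0)
      = Xmᵀ *ᵥ (w - Hd *ᵥ (Zm *ᵥ (Λ *ᵥ (Zmᵀ *ᵥ w - Ω *ᵥ b0)))) := by
  simp only [Matrix.transpose_add, Matrix.transpose_neg, Matrix.transpose_mul,
    Matrix.transpose_transpose, hHd, hΛ, Matrix.mulVec_sub, Matrix.add_mulVec,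
    Matrix.neg_mulVec, ← Matrix.mulVec_mulVec]
  abel
/-- **Gradient of the reparametrized GLMM log joint density with respect to `β`,
approach 1 (Lemma 3, first part).** Here `h i j` is the log-partition function of
`y_{ij}` with derivatives `h1 i j` and `h2 i j ≥ 0`, `η̂_i` is fixed,
`Λ_i = (Ω + Z_iᵀ H_i(η̂_i) Z_i)⁻¹`, `λ_i(β) = Λ_i Z_iᵀ{y_i − g_i(η̂_i) + H_i(η̂_i)(η̂_i − X_iβ)}`,
`L_i L_iᵀ = Λ_i` (Cholesky), `b_i(β) = L_i b̃_i + λ_i(β)`, `η_i(β) = X_iβ + Z_i b_i(β)`,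
`a_i = Z_iᵀ(y_i − g_i(η_i)) − Ω b_i`, the prior on `β` is `N(0, σβ² I_p)`, and the
reparametrized log joint density is
`ℓ(β) = −βᵀβ/(2σβ²) + c0 + Σᵢ { Σⱼ (y_{ij}η_{ij} − h_{ij}(η_{ij})) + (1/2)log|Ω|
  − (1/2)b_iᵀΩb_i + log|L_i| + c_i }`. Then
`∇_β ℓ = Σᵢ X_iᵀ{y_i − g_i(η_i) − H_i(η̂_i) Z_i Λ_i a_i} − β/σβ²`. -/
theorem gradient_beta_approach1
    (n p r : ℕ) (ni : Fin n → ℕ)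
    (y : (i : Fin n) → Fin (ni i) → ℝ)
    (X : (i : Fin n) → Matrix (Fin (ni i)) (Fin p) ℝ)
    (Z : (i : Fin n) → Matrix (Fin (ni i)) (Fin r) ℝ)
    (h h1 h2 : (i : Fin n) → Fin (ni i) → ℝ → ℝ)
    (hder : ∀ i j x, HasDerivAt (h i j) (h1 i j x) x)
    (hnn : ∀ i j x, 0 ≤ h2 i j x)
    (Ω : Matrix (Fin r) (Fin r) ℝ) (hΩsym : Ωᵀ = Ω) (hΩ : Ω.PosDef)
    (σβ2 : ℝ) (hσ : 0 < σβ2)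
    (ηhat : (i : Fin n) → Fin (ni i) → ℝ)
    (gv : (i : Fin n) → (Fin (ni i) → ℝ) → Fin (ni i) → ℝ)
    (hgv : ∀ i η j, gv i η j = h1 i j (η j))
    (Hm : (i : Fin n) → (Fin (ni i) → ℝ) → Matrix (Fin (ni i)) (Fin (ni i)) ℝ)
    (hHm : ∀ i η, Hm i η = Matrix.diagonal fun j => h2 i j (η j))
    (Lam : Fin n → Matrix (Fin r) (Fin r) ℝ)
    (hLam : ∀ i, Lam i = (Ω + (Z i)ᵀ * Hm i (ηhat i) * Z i)⁻¹)
    (L : Fin n → Matrix (Fin r) (Fin r) ℝ)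
    (hLlow : ∀ i, ∀ j k : Fin r, j < k → L i j k = 0)
    (hLdiag : ∀ i, ∀ j : Fin r, 0 < L i j j)
    (hchol : ∀ i, L i * (L i)ᵀ = Lam i)
    (btil : Fin n → Fin r → ℝ)
    (lam : (Fin p → ℝ) → Fin n → Fin r → ℝ)
    (hlam : ∀ β i, lam β i = Lam i *ᵥ ((Z i)ᵀ *ᵥ
      (y i - gv i (ηhat i) + Hm i (ηhat i) *ᵥ (ηhat i - X i *ᵥ β))))
    (b : (Fin p → ℝ) → Fin n → Fin r → ℝ)
    (hb : ∀ β i, b β i = L i *ᵥ btil i + lam β i)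
    (η : (Fin p → ℝ) → (i : Fin n) → Fin (ni i) → ℝ)
    (hη : ∀ β i, η β i = X i *ᵥ β + Z i *ᵥ b β i)
    (c0 : ℝ) (c : Fin n → ℝ)
    (ℓ : (Fin p → ℝ) → ℝ)
    (hℓ : ∀ β, ℓ β = -(β ⬝ᵥ β) / (2 * σβ2) + c0
      + ∑ i, ((∑ j, (y i j * η β i j - h i j (η β i j)))
          + (1 / 2) * Real.log Ω.det - (1 / 2) * (b β i ⬝ᵥ (Ω *ᵥ b β i))
          + Real.log |(L i).det| + c i))
    (β0 : Fin p → ℝ)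
    (a : Fin n → Fin r → ℝ)
    (ha : ∀ i, a i = (Z i)ᵀ *ᵥ (y i - gv i (η β0 i)) - Ω *ᵥ b β0 i) :
    HasFDerivAt ℓ
      (dotCLM ((∑ i, (X i)ᵀ *ᵥ
          (y i - gv i (η β0 i) - Hm i (ηhat i) *ᵥ (Z i *ᵥ (Lam i *ᵥ a i))))
        - (1 / σβ2) • β0))
      β0 := by
  -- symmetry facts
  have hHsym : ∀ i, (Hm i (ηhat i))ᵀ = Hm i (ηhat i) := by
    intro i; rw [hHm]; exact Matrix.diagonal_transpose _
  have hLamsym : ∀ i, (Lam i)ᵀ = Lam i := by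
    intro i
    rw [hLam, Matrix.transpose_nonsing_inv]
    congr 1
    simp [Matrix.transpose_add, Matrix.transpose_mul, Matrix.transpose_transpose,
      hΩsym, hHsym i, Matrix.mul_assoc]
  -- affine representations
  set N : (i : Fin n) → Matrix (Fin r) (Fin p) ℝ :=
    fun i => -(Lam i * (Z i)ᵀ * Hm i (ηhat i) * X i) with hN
  set d : (i : Fin n) → Fin r → ℝ :=
    fun i => L i *ᵥ btil i + Lam i *ᵥ ((Z i)ᵀ *ᵥ
      (y i - gv i (ηhat i) + Hm i (ηhat i) *ᵥ ηhat i)) with hd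
  set M : (i : Fin n) → Matrix (Fin (ni i)) (Fin p) ℝ :=
    fun i => X i + Z i * N i with hM
  set e : (i : Fin n) → Fin (ni i) → ℝ := fun i => Z i *ᵥ d i with he
  have beq : ∀ β i, b β i = d i + N i *ᵥ β := by
    intro β i
    rw [hb, hlam, hd, hN]
    simp only [Matrix.mulVec_add, Matrix.mulVec_sub, Matrix.neg_mulVec,
      ← Matrix.mulVec_mulVec]
    abel
  have ηeq : ∀ β i, η β i = e i + M i *ᵥ β := by
    intro β i
    rw [hη, beq, he, hM]
    simp only [Matrix.mulVec_add, Matrix.add_mulVec, ← Matrix.mulVec_mulVec]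
    abel
  -- rewrite ℓ
  have hℓfun : ℓ = fun β => -(β ⬝ᵥ β) / (2 * σβ2) + c0
      + ∑ i, ((∑ j, (y i j * (e i + M i *ᵥ β) j - h i j ((e i + M i *ᵥ β) j)))
          + (1 / 2) * Real.log Ω.det
          - (1 / 2) * ((d i + N i *ᵥ β) ⬝ᵥ (Ω *ᵥ (d i + N i *ᵥ β)))
          + Real.log |(L i).det| + c i) := by
    funext β
    rw [hℓ]
    simp only [ηeq, beq]
  rw [hℓfun]
  -- derivative of the prior term
  have hterm1 : HasFDerivAt (fun β : Fin p → ℝ => -(β ⬝ᵥ β) / (2 * σβ2))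
      (dotCLM ((-(1 / σβ2)) • β0)) β0 := by
    have hfeq : (fun β : Fin p → ℝ => -(β ⬝ᵥ β) / (2 * σβ2))
        = fun β => (-(1 / (2 * σβ2))) * (β ⬝ᵥ β) := by
      funext β; rw [div_eq_mul_inv]; ring
    rw [hfeq]
    have := (hasFDerivAt_dotself β0).const_mul (-(1 / (2 * σβ2)))
    refine this.congr_fderiv (Eq.symm ?_)
    rw [← dotCLM_smul, smul_smul]
    congr 1
    congr 1
    field_simp
  -- per-group derivatives
  have hpiece : ∀ i, HasFDerivAt (fun β : Fin p → ℝ =>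
      (∑ j, (y i j * (e i + M i *ᵥ β) j - h i j ((e i + M i *ᵥ β) j)))
        + (1 / 2) * Real.log Ω.det
        - (1 / 2) * ((d i + N i *ᵥ β) ⬝ᵥ (Ω *ᵥ (d i + N i *ᵥ β)))
        + Real.log |(L i).det| + c i)
      (dotCLM ((M i)ᵀ *ᵥ (y i - gv i (η β0 i))
        - (N i)ᵀ *ᵥ (Ω *ᵥ (d i + N i *ᵥ β0)))) β0 := by
    intro i
    have hsum : HasFDerivAt (fun β : Fin p → ℝ =>
        (∑ j, (y i j * (e i + M i *ᵥ β) j - h i j ((e i + M i *ᵥ β) j))))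
        (dotCLM ((M i)ᵀ *ᵥ (y i - gv i (η β0 i)))) β0 := by
      have hj : ∀ j : Fin (ni i), HasFDerivAt (fun β : Fin p → ℝ =>
          y i j * (e i + M i *ᵥ β) j - h i j ((e i + M i *ᵥ β) j))
          (dotCLM ((y i j - h1 i j ((e i + M i *ᵥ β0) j)) • M i j)) β0 := by
        intro j
        have haff := hasFDerivAt_affine (M i) (e i) j β0
        have hsc : HasDerivAt (fun t => y i j * t - h i j t)
            (y i j - h1 i j ((e i + M i *ᵥ β0) j)) ((e i + M i *ᵥ β0) j) := by
          have := ((hasDerivAt_id ((e i + M i *ᵥ β0) j)).const_mul (y i j)).sub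
            (hder i j ((e i + M i *ᵥ β0) j))
          rw [mul_one] at this; exact this
        have := hsc.comp_hasFDerivAt β0 haff
        rw [dotCLM_smul]
        exact this
      have H := HasFDerivAt.fun_sum (fun j (_ : j ∈ Finset.univ) => hj j)
      have hu : y i - gv i (η β0 i)
          = fun k => y i k - h1 i k ((e i + M i *ᵥ β0) k) :=
        funext fun k => by simp [hgv, ηeq β0 i]
      rw [hu, ← sum_smul_rows, dotCLM_sum]
      exact H
    have hquad := hasFDerivAt_quad_affine Ω hΩsym (N i) (d i) β0
    have H := (((hsum.add_const ((1 / 2) * Real.log Ω.det)).sub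
        (hquad.const_mul (1 / 2))).add_const (Real.log |(L i).det|)).add_const (c i)
    refine H.congr_fderiv (Eq.symm ?_)
    rw [← dotCLM_smul, smul_smul]
    norm_num
    rw [dotCLM_sub]
  -- assemble
  have Htot := (hterm1.add_const c0).add
    (HasFDerivAt.fun_sum (fun i (_ : i ∈ Finset.univ) => hpiece i))
  refine Htot.congr_fderiv (Eq.symm ?_)
  rw [← dotCLM_sum, ← dotCLM_add]
  congr 1
  have hper : ∀ i, (M i)ᵀ *ᵥ (y i - gv i (η β0 i)) - (N i)ᵀ *ᵥ (Ω *ᵥ (d i + N i *ᵥ β0))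
      = (X i)ᵀ *ᵥ (y i - gv i (η β0 i) - Hm i (ηhat i) *ᵥ (Z i *ᵥ (Lam i *ᵥ a i))) := by
    intro i
    have hb0 : b β0 i = d i + N i *ᵥ β0 := beq β0 i
    rw [← hb0, ha, hM, hN]
    exact key_vec (X i) (Z i) (Hm i (ηhat i)) (hHsym i) (Lam i) (hLamsym i) Ω
      (y i - gv i (η β0 i)) (b β0 i)
  rw [Finset.sum_congr rfl (fun i _ => hper i), neg_smul]
  abel
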